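/- Let ρ be a Borel probability measure on ℝ whose Fourier–Stieltjes transform ρ̂(ξ) = ∫ e^{−iξx} dρ(x) vanishes on some nonempty open subset of ℝ. Then there exists an integrable function F ∈ L¹(ℝ; ℂ) which is not almost everywhere zero, such that the convolution of F with ρ vanishes: (F ∗ ρ)(x) = ∫ F(x − y) dρ(y) = 0 for almost every x ∈ ℝ. -/

import Mathlib

open MeasureTheory Complex FourierTransform Real

/-- A smooth compactly supported function is (the underlying function of) a Schwartz map. -/
lemma exists_schwartzMap_of_compactSupport {f : ℝ → ℂ}
    (hf : ContDiff ℝ ((⊤ : ℕ∞) : WithTop ℕ∞) f)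
    (h2 : HasCompactSupport f) : ∃ F : SchwartzMap ℝ ℂ, ⇑F = f := by
  refine ⟨⟨f, hf, ?_⟩, rfl⟩
  intro k n
  have hcont : Continuous fun x : ℝ => ‖x‖ ^ k * ‖iteratedFDeriv ℝ n f x‖ :=
    ((continuous_norm).pow k).mul
      ((hf.continuous_iteratedFDeriv (by exact_mod_cast le_top)).norm)
  have hsupp : HasCompactSupport fun x : ℝ => ‖x‖ ^ k * ‖iteratedFDeriv ℝ n f x‖ := by
    apply HasCompactSupport.mono ((h2.iteratedFDeriv (𝕜 := ℝ) n).norm)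
    intro x hx
    simp only [Function.mem_support, ne_eq] at hx ⊢
    intro h0
    exact hx (by rw [h0, mul_zero])
  obtain ⟨C, hC⟩ := hsupp.exists_bound_of_continuous hcont
  exact ⟨C, fun x => (le_abs_self _).trans (hC x)⟩

/-- If the Fourier–Stieltjes transform `ρ̂(ξ) = ∫ e^{−iξx} dρ(x)` of a Borel probability measure
`ρ` on `ℝ` vanishes on a nonempty open set, then there is a nonzero `F ∈ L¹(ℝ; ℂ)` with
`(F ∗ ρ)(x) = ∫ F(x−y) dρ(y) = 0` for almost every `x`. -/
theorem exists_nonzero_conv_zero_of_fourier_vanishes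
    (ρ : Measure ℝ) [IsProbabilityMeasure ρ]
    (hρ : ∃ U : Set ℝ, IsOpen U ∧ U.Nonempty ∧
      ∀ ξ ∈ U, (∫ x, Complex.exp (-(ξ * x) * Complex.I) ∂ρ) = 0) :
    ∃ F : ℝ → ℂ, Integrable F volume ∧ ¬ (F =ᵐ[volume] 0) ∧
      ∀ᵐ x : ℝ ∂volume, (∫ y, F (x - y) ∂ρ) = 0 := by
  obtain ⟨U, hU, ⟨ξ₀, hξ₀⟩, hvan⟩ := hρ
  obtain ⟨r, hr, hball⟩ := Metric.isOpen_iff.1 hU ξ₀ hξ₀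
  set φ : ContDiffBump ξ₀ := ⟨r / 2, r, by linarith, by linarith⟩ with hφ
  set g : ℝ → ℂ := fun ξ => (φ ξ : ℂ) with hgdef
  have hg_cd : ContDiff ℝ ((⊤ : ℕ∞) : WithTop ℕ∞) g :=
    Complex.ofRealCLM.contDiff.comp φ.contDiff
  have hg_supp : HasCompactSupport g :=
    φ.hasCompactSupport.comp_left (g := Complex.ofReal) Complex.ofReal_zero
  have hg_int : Integrable g volume :=
    hg_cd.continuous.integrable_of_hasCompactSupport hg_supp
  obtain ⟨G, hG⟩ := exists_schwartzMap_of_compactSupport hg_cd hg_supp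
  set F : ℝ → ℂ := fun x => ∫ ξ : ℝ, Complex.exp (x * ξ * Complex.I) * g ξ with hF
  -- F is the Fourier transform of g (suitably rescaled)
  have key : ∀ x : ℝ, F x = 𝓕 (⇑G) (-(2 * π)⁻¹ * x) := by
    intro x
    rw [hF, hG, Real.fourier_eq']
    refine integral_congr_ae (Filter.Eventually.of_forall fun ξ => ?_)
    simp only [smul_eq_mul, RCLike.inner_apply, starRingEnd_apply, star_trivial]
    congr 2
    push_cast
    have hπ : (π : ℂ) ≠ 0 := by exact_mod_cast Real.pi_ne_zero
    field_simp
  have hGF : Integrable (𝓕 (⇑G)) volume := by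
    have := (SchwartzMap.fourierTransformCLM ℂ G).integrable (μ := volume)
    simpa [SchwartzMap.fourier_coe] using this
  have hR : (-(2 * π)⁻¹ : ℝ) ≠ 0 := by
    simp [Real.pi_ne_zero]
  have hFint : Integrable F volume := by
    have : Integrable (fun x => 𝓕 (⇑G) (-(2 * π)⁻¹ * x)) volume :=
      hGF.comp_mul_left' hR
    exact this.congr (Filter.Eventually.of_forall fun x => (key x).symm)
  refine ⟨F, hFint, ?_, ?_⟩
  · -- F is not a.e. zero since F is continuous and F 0 = ∫ φ > 0
    have hFGcont : Continuous (𝓕 (⇑G)) :=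
      (SchwartzMap.fourierTransformCLM ℂ G).continuous
    have hFcont : Continuous F := by
      have hc : Continuous fun x : ℝ => 𝓕 (⇑G) (-(2 * π)⁻¹ * x) :=
        hFGcont.comp (continuous_const.mul continuous_id)
      exact hc.congr fun x => (key x).symm
    have hF0 : F 0 ≠ 0 := by
      have h1 : F 0 = ((∫ ξ, φ ξ : ℝ) : ℂ) := by
        rw [hF]
        simp only [Complex.ofReal_zero, zero_mul, Complex.exp_zero, one_mul, hgdef]
        exact integral_ofReal
      rw [h1]
      exact_mod_cast (φ.integral_pos).ne'
    intro h
    have h' : F =ᵐ[volume] (fun _ : ℝ => (0 : ℂ)) := h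
    rw [hFcont.ae_eq_iff_eq volume continuous_const] at h'
    exact hF0 (congrFun h' 0)
  · -- the convolution vanishes everywhere
    refine Filter.Eventually.of_forall fun x => ?_
    have hnorm : ∀ (y ξ : ℝ),
        ‖Complex.exp (((x : ℂ) - y) * ξ * Complex.I)‖ = 1 := by
      intro y ξ
      have h1 : ((x : ℂ) - y) * ξ = (((x - y) * ξ : ℝ) : ℂ) := by push_cast; ring
      rw [h1, Complex.norm_exp_ofReal_mul_I]
    have hmeas : AEStronglyMeasurable
        (Function.uncurry fun y ξ : ℝ => Complex.exp (((x : ℂ) - y) * ξ * Complex.I) * g ξ)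
        (ρ.prod volume) := by
      apply Continuous.aestronglyMeasurable
      apply Continuous.mul
      · exact Complex.continuous_exp.comp (by fun_prop)
      · exact hg_cd.continuous.comp continuous_snd
    have hprod : Integrable
        (Function.uncurry fun y ξ : ℝ => Complex.exp (((x : ℂ) - y) * ξ * Complex.I) * g ξ)
        (ρ.prod volume) := by
      rw [integrable_prod_iff hmeas]
      constructor
      · refine Filter.Eventually.of_forall fun y => ?_
        refine hg_int.bdd_mul ?_ (Filter.Eventually.of_forall fun ξ => le_of_eq (hnorm y ξ))
        exact (Complex.continuous_exp.comp (by fun_prop)).aestronglyMeasurable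
      · apply Integrable.congr (integrable_const (∫ ξ, ‖g ξ‖))
        refine Filter.Eventually.of_forall fun y => ?_
        refine integral_congr_ae (Filter.Eventually.of_forall fun ξ => ?_)
        simp only [Function.uncurry]
        rw [norm_mul, hnorm y ξ, one_mul]
    have swap := integral_integral_swap hprod
    have e1 : (fun y : ℝ => F (x - y))
        = fun y : ℝ => ∫ ξ : ℝ, Complex.exp (((x : ℂ) - y) * ξ * Complex.I) * g ξ := by
      funext y
      rw [hF]
      refine integral_congr_ae (Filter.Eventually.of_forall fun ξ => ?_)
      push_cast
      ring_nf
    calc ∫ y : ℝ, F (x - y) ∂ρ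
        = ∫ y : ℝ, (∫ ξ : ℝ, Complex.exp (((x : ℂ) - y) * ξ * Complex.I) * g ξ) ∂ρ := by
          rw [e1]
      _ = ∫ ξ : ℝ, (∫ y : ℝ, Complex.exp (((x : ℂ) - y) * ξ * Complex.I) * g ξ ∂ρ) := swap
      _ = 0 := by
          rw [← integral_zero ℝ ℂ (μ := volume)]
          refine integral_congr_ae (Filter.Eventually.of_forall fun ξ => ?_)
          by_cases hξ : ξ ∈ Metric.ball ξ₀ r
          · have hξU : ξ ∈ U := hball hξ
            have hsplit : ∀ y : ℝ, Complex.exp (((x : ℂ) - y) * ξ * Complex.I) * g ξ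
                = (Complex.exp ((x : ℂ) * ξ * Complex.I) * g ξ)
                    * Complex.exp (-(ξ * y) * Complex.I) := by
              intro y
              have hx : Complex.exp (((x : ℂ) - y) * ξ * Complex.I)
                  = Complex.exp ((x : ℂ) * ξ * Complex.I)
                      * Complex.exp (-((ξ : ℂ) * y) * Complex.I) := by
                rw [← Complex.exp_add]; ring_nf
              rw [hx]; ring
            calc ∫ y : ℝ, Complex.exp (((x : ℂ) - y) * ξ * Complex.I) * g ξ ∂ρ
                = ∫ y : ℝ, (Complex.exp ((x : ℂ) * ξ * Complex.I) * g ξ)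
                    * Complex.exp (-(ξ * y) * Complex.I) ∂ρ :=
                  integral_congr_ae (Filter.Eventually.of_forall fun y => hsplit y)
              _ = (Complex.exp ((x : ℂ) * ξ * Complex.I) * g ξ)
                    * ∫ y : ℝ, Complex.exp (-(ξ * y) * Complex.I) ∂ρ := integral_const_mul _ _
              _ = 0 := by rw [hvan ξ hξU, mul_zero]
          · have hφ0 : φ ξ = 0 := by
              by_contra h0
              exact hξ (by rw [← φ.support_eq]; exact Function.mem_support.2 h0)
            have hg0 : g ξ = 0 := by rw [hgdef]; simp [hφ0]
            simp [hg0]
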